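/- Let g_t (for t ∈ ℂ, |t| < 1, t ≠ 0) be the 8-dimensional Lie algebra with complex structure whose (1,0)-form basis φ¹,...,φ⁴ satisfies dφ¹ = dφ² = 0, dφ³ = φ¹∧φ̄¹, dφ⁴ = (1/(1-|t|²))·φ¹∧φ² - (t/(1-|t|²))·φ¹∧φ̄². Then every closed (2,0)-form Ω on g_t satisfies Ω ∧ Ω = 0; in particular g_t admits no invariant complex symplectic form. -/

import Mathlib

/-
STATEMENT 4: For the deformed 8-dimensional nilpotent Lie algebra g_t (t ∈ ℂ, 0 < |t| < 1)
with (1,0)-forms satisfying dφ¹ = dφ² = 0, dφ³ = φ¹∧φ̄¹,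
dφ⁴ = (1/(1-|t|²)) φ¹∧φ² - (t/(1-|t|²)) φ¹∧φ̄², every closed (2,0)-form Ω satisfies
Ω∧Ω = 0; in particular g_t admits no invariant complex symplectic form.

Model: exterior algebra over ℂ on generators gen 0..3 = φ¹..φ⁴, gen 4..7 = φ̄¹..φ̄⁴;
d determined by structure equations (and conjugates) and the Leibniz rule; a generic
invariant (2,0)-form is Ω = α φ¹² + β φ¹³ + γ φ¹⁴ + τ φ²³ + θ φ²⁴ + ζ φ³⁴.
-/

noncomputable section

abbrev E := ExteriorAlgebra ℂ (Fin 8 → ℂ)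

def gen (i : Fin 8) : E := ExteriorAlgebra.ι ℂ (Pi.single i 1)

def dgen (t : ℂ) : Fin 8 → E :=
  ![0, 0, gen 0 * gen 4,
    ((1 - (Complex.normSq t : ℂ))⁻¹) • (gen 0 * gen 1)
      - (t * (1 - (Complex.normSq t : ℂ))⁻¹) • (gen 0 * gen 5),
    0, 0, gen 4 * gen 0,
    ((1 - (Complex.normSq t : ℂ))⁻¹) • (gen 4 * gen 5)
      - ((starRingEnd ℂ) t * (1 - (Complex.normSq t : ℂ))⁻¹) • (gen 4 * gen 1)]

def d2 (t : ℂ) (i j : Fin 8) : E := dgen t i * gen j - gen i * dgen t j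

/-- generic invariant (2,0)-form. -/
def Om (a b c d e f : ℂ) : E :=
  a • (gen 0 * gen 1) + b • (gen 0 * gen 2) + c • (gen 0 * gen 3) +
  d • (gen 1 * gen 2) + e • (gen 1 * gen 3) + f • (gen 2 * gen 3)

/-- its differential, by linearity and the Leibniz rule. -/
def dOm (t a b c d e f : ℂ) : E :=
  a • d2 t 0 1 + b • d2 t 0 2 + c • d2 t 0 3 +
  d • d2 t 1 2 + e • d2 t 1 3 + f • d2 t 2 3

/-! ### auxiliary lemmas -/

lemma gsq (i : Fin 8) : gen i * gen i = 0 := ExteriorAlgebra.ι_sq_zero _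

lemma gswap (i j : Fin 8) : gen j * gen i = -(gen i * gen j) :=
  eq_neg_of_add_eq_zero_right (ExteriorAlgebra.ι_add_mul_swap _ _)

lemma swapL (i j k : Fin 8) : gen j * (gen i * gen k) = -(gen i * (gen j * gen k)) := by
  rw [← mul_assoc, gswap i j, neg_mul, mul_assoc]

lemma zstar (i j : Fin 8) : (gen 0 * gen i) * (gen 0 * gen j) = 0 := by
  rw [mul_assoc, swapL 0 i j, mul_neg, ← mul_assoc, gsq, zero_mul, neg_zero]

/-- the coefficient-extraction alternating map for a triple of indices. -/
def coeffMap (idx : Fin 3 → Fin 8) : (Fin 8 → ℂ) [⋀^Fin 3]→ₗ[ℂ] ℂ :=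
  (Matrix.detRowAlternating : (Fin 3 → ℂ) [⋀^Fin 3]→ₗ[ℂ] ℂ).compLinearMap
    (LinearMap.funLeft ℂ ℂ idx)

def fam (idx : Fin 3 → Fin 8) : ∀ i : ℕ, (Fin 8 → ℂ) [⋀^Fin i]→ₗ[ℂ] ℂ
  | 3 => coeffMap idx
  | _ => 0

def F (idx : Fin 3 → Fin 8) : E →ₗ[ℂ] ℂ := ExteriorAlgebra.liftAlternating (fam idx)

lemma F_mono (idx : Fin 3 → Fin 8) (i j k : Fin 8) :
    F idx (gen i * (gen j * gen k)) =
      coeffMap idx ![Pi.single i 1, Pi.single j 1, Pi.single k 1] := by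
  unfold F gen
  rw [ExteriorAlgebra.liftAlternating_ι_mul, ExteriorAlgebra.liftAlternating_ι_mul,
    ExteriorAlgebra.liftAlternating_ι]
  rfl

end

section evals

open Complex

lemma cne (t : ℂ) (ht : ‖t‖ < 1) :
    ((1 - (Complex.normSq t : ℂ))⁻¹ : ℂ) ≠ 0 := by
  have hlt : Complex.normSq t < 1 := by
    have := Complex.sq_norm t
    nlinarith [norm_nonneg t]
  refine inv_ne_zero ?_
  intro h
  have h1 : ((Complex.normSq t : ℂ)) = 1 := by linear_combination -h
  rw [show (1:ℂ) = ((1:ℝ):ℂ) by norm_num] at h1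
  exact absurd (Complex.ofReal_inj.mp h1) (by linarith)

lemma d2_01 (t : ℂ) : d2 t 0 1 = 0 := by
  simp [d2, dgen]

lemma d2_02 (t : ℂ) : d2 t 0 2 = 0 := by
  simp [d2, dgen, ← mul_assoc, gsq]

lemma d2_03 (t : ℂ) : d2 t 0 3 = 0 := by
  simp [d2, dgen, mul_sub, mul_smul_comm, ← mul_assoc, gsq]

lemma d2_12 (t : ℂ) : d2 t 1 2 = gen 0 * (gen 1 * gen 4) := by
  simp [d2, dgen, swapL 0 1]

lemma d2_13 (t : ℂ) :
    d2 t 1 3 = -((t * (1 - (Complex.normSq t : ℂ))⁻¹) • (gen 0 * (gen 1 * gen 5))) := by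
  simp [d2, dgen, mul_sub, mul_smul_comm, swapL 0 1, gsq, mul_zero, smul_zero, smul_neg]

lemma d2_23 (t : ℂ) :
    d2 t 2 3 = -(gen 0 * (gen 3 * gen 4))
      - ((1 - (Complex.normSq t : ℂ))⁻¹) • (gen 0 * (gen 1 * gen 2))
      - (t * (1 - (Complex.normSq t : ℂ))⁻¹) • (gen 0 * (gen 2 * gen 5)) := by
  simp only [d2, dgen, Matrix.cons_val_two, Matrix.cons_val_three, Matrix.tail_cons,
    Matrix.head_cons, mul_sub, mul_smul_comm, mul_assoc, gswap 3 4, gswap 1 2,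
    swapL 0 2, mul_neg, neg_neg, smul_neg]
  module

end evals

lemma dOm_eq (t α β γ τ θ ζ : ℂ) :
    dOm t α β γ τ θ ζ =
      τ • (gen 0 * (gen 1 * gen 4))
      - (θ * (t * (1 - (Complex.normSq t : ℂ))⁻¹)) • (gen 0 * (gen 1 * gen 5))
      - (ζ * (1 - (Complex.normSq t : ℂ))⁻¹) • (gen 0 * (gen 1 * gen 2))
      - ζ • (gen 0 * (gen 3 * gen 4))
      - (ζ * (t * (1 - (Complex.normSq t : ℂ))⁻¹)) • (gen 0 * (gen 2 * gen 5)) := by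
  rw [dOm, d2_01, d2_02, d2_03, d2_12, d2_13, d2_23]
  module

lemma detRow_eq (v : Fin 3 → Fin 3 → ℂ) :
    Matrix.detRowAlternating v = Matrix.det (Matrix.of v) := rfl

theorem stmt4 (t : ℂ) (ht0 : t ≠ 0) (ht : ‖t‖ < 1) :
    (∀ α β γ τ θ ζ : ℂ, dOm t α β γ τ θ ζ = 0 →
        Om α β γ τ θ ζ * Om α β γ τ θ ζ = 0) ∧
    ¬ ∃ α β γ τ θ ζ : ℂ, dOm t α β γ τ θ ζ = 0 ∧
        Om α β γ τ θ ζ * Om α β γ τ θ ζ ≠ 0 := by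
  have hc := cne t ht
  have main : ∀ α β γ τ θ ζ : ℂ, dOm t α β γ τ θ ζ = 0 →
      Om α β γ τ θ ζ * Om α β γ τ θ ζ = 0 := by
    intro α β γ τ θ ζ hcl
    rw [dOm_eq] at hcl
    have h012 := congrArg (F ![0,1,2]) hcl
    have h014 := congrArg (F ![0,1,4]) hcl
    have h015 := congrArg (F ![0,1,5]) hcl
    simp only [map_sub, map_smul, map_zero, F_mono] at h012 h014 h015
    simp only [coeffMap, AlternatingMap.compLinearMap_apply, detRow_eq,
      Matrix.det_fin_three, Matrix.of_apply, LinearMap.funLeft_apply, Pi.single_apply,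
      Matrix.cons_val_zero, Matrix.cons_val_one, Matrix.head_cons, Matrix.cons_val_two,
      Matrix.tail_cons] at h012 h014 h015
    norm_num [show ((2:Fin 8) = 4) = False by decide, show ((2:Fin 8) = 5) = False by decide,
      show ((1:Fin 8) = 3) = False by decide, show ((1:Fin 8) = 4) = False by decide,
      show ((1:Fin 8) = 5) = False by decide, show ((2:Fin 8) = 3) = False by decide,
      show ((4:Fin 8) = 5) = False by decide, show ((4:Fin 8) = 1) = False by decide,
      show ((4:Fin 8) = 0) = False by decide, show ((4:Fin 8) = 2) = False by decide,
      show ((0:Fin 8) = 4) = False by decide, show ((0:Fin 8) = 5) = False by decide,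
      show ((4:Fin 8) = 3) = False by decide, show ((5:Fin 8) = 4) = False by decide,
      show ((5:Fin 8) = 1) = False by decide, show ((5:Fin 8) = 0) = False by decide,
      show ((5:Fin 8) = 2) = False by decide, show ((5:Fin 8) = 3) = False by decide,
      show ((0:Fin 8) = 2) = False by decide, show ((0:Fin 8) = 3) = False by decide,
      show ((1:Fin 8) = 2) = False by decide, show ((2:Fin 8) = 0) = False by decide,
      show ((2:Fin 8) = 1) = False by decide, show ((0:Fin 8) = 1) = False by decide,
      show ((1:Fin 8) = 0) = False by decide, show ((3:Fin 8) = 4) = False by decide, Matrix.vecHead, Matrix.vecTail]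
      at h012 h014 h015
    have hcc : (1 - (Complex.normSq t : ℂ)) ≠ 0 := fun h => hc (by rw [h]; simp)
    have hζ : ζ = 0 := h012.resolve_right hcc
    have hτ : τ = 0 := h014
    have hθ : θ = 0 := by
      rcases h015 with h | h | h
      · exact h
      · exact absurd h ht0
      · exact absurd h hcc
    subst hζ hτ hθ
    simp only [Om, zero_smul, add_zero]
    simp only [mul_add, add_mul, smul_mul_assoc, mul_smul_comm, zstar, smul_zero, add_zero]
  exact ⟨main, fun ⟨α, β, γ, τ, θ, ζ, h1, h2⟩ => h2 (main α β γ τ θ ζ h1)⟩
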